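/- Under the hypotheses above (eigenvalue 0, gap λ(s)), ‖R(s)φ'(s)‖ ≤ ‖H'(s)‖/λ(s)². -/

import Mathlib

open scoped InnerProductSpace

/-- Under the eigenvalue-zero hypotheses with spectral gap `λ(s)`,
`‖R(s) φ'(s)‖ ≤ ‖H'(s)‖ / λ(s)²`. -/
theorem stmt_3 {n : ℕ}
    (H H' R Q : ℝ → EuclideanSpace ℂ (Fin n) →L[ℂ] EuclideanSpace ℂ (Fin n))
    (φ φ' : ℝ → EuclideanSpace ℂ (Fin n))
    (lam : ℝ → ℝ)
    (hlam : ∀ s, 0 < lam s)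
    (hherm : ∀ s, IsSelfAdjoint (H s))
    (hRherm : ∀ s, IsSelfAdjoint (R s))
    (hHd : ∀ s, HasDerivAt H (H' s) s)
    (hφd : ∀ s, HasDerivAt φ (φ' s) s)
    (hunit : ∀ s, ‖φ s‖ = 1)
    (heig : ∀ s, H s (φ s) = 0)
    (horth : ∀ s, ⟪φ' s, φ s⟫_ℂ = 0)
    -- `Q(s) = 1 - |φ(s)⟩⟨φ(s)|`
    (hQ : ∀ s, Q s = 1 - (innerSL ℂ (φ s)).smulRight (φ s))
    -- `R(s)` is the pseudo-inverse of `H(s)` on the support of `Q(s)`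
    (hHR : ∀ s, H s ∘L R s = Q s)
    (hQR : ∀ s, Q s ∘L R s = R s)
    -- all nonzero eigenvalues of `H(s)` are at least `λ(s)` in absolute value
    (hRnorm : ∀ s, ‖R s‖ ≤ 1 / lam s) :
    ∀ s, ‖R s (φ' s)‖ ≤ ‖H' s‖ / (lam s) ^ 2 := by
  intro s
  
  -- Step 1: differentiate H(s)φ(s) = 0 to get H'(s)φ(s) + H(s)φ'(s) = 0
  have hkey : H' s (φ s) + H s (φ' s) = 0 := by
    set L : (EuclideanSpace ℂ (Fin n) →L[ℂ] EuclideanSpace ℂ (Fin n)) →L[ℝ] (EuclideanSpace ℂ (Fin n) →L[ℝ] EuclideanSpace ℂ (Fin n)) :=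
      ContinuousLinearMap.restrictScalarsL ℂ (EuclideanSpace ℂ (Fin n)) (EuclideanSpace ℂ (Fin n)) ℝ ℝ
    have hHr : HasDerivAt (fun t => L (H t)) (L (H' s)) s :=
      L.hasFDerivAt.comp_hasDerivAt s (hHd s)
    have h1 : HasDerivAt (fun t => (L (H t)) (φ t)) ((L (H' s)) (φ s) + (L (H s)) (φ' s)) s :=
      hHr.clm_apply (hφd s)
    have h2 : HasDerivAt (fun t => (L (H t)) (φ t)) 0 s := by
      have : (fun t => (L (H t)) (φ t)) = fun _ => (0 : EuclideanSpace ℂ (Fin n)) := by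
        funext t
        exact heig t
      rw [this]
      exact hasDerivAt_const s 0
    have := h1.unique h2
    exact this
  -- Q is self-adjoint as a sesquilinear form
  have hQsa : ∀ x y : EuclideanSpace ℂ (Fin n), ⟪Q s x, y⟫_ℂ = ⟪x, Q s y⟫_ℂ := by
    intro x y
    rw [hQ s]
    simp only [ContinuousLinearMap.sub_apply, ContinuousLinearMap.one_apply,
      ContinuousLinearMap.smulRight_apply, innerSL_apply_apply, inner_sub_left, inner_sub_right,
      inner_smul_left, inner_smul_right]
    rw [inner_conj_symm]
    ring
  -- Step 2: R H = Q
  have hRH : ∀ x : EuclideanSpace ℂ (Fin n), R s (H s x) = Q s x := by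
    intro x
    apply ext_inner_left ℂ
    intro y
    calc ⟪y, R s (H s x)⟫_ℂ = ⟪R s y, H s x⟫_ℂ := by
          rw [← ContinuousLinearMap.adjoint_inner_left, (hRherm s).adjoint_eq]
      _ = ⟪H s (R s y), x⟫_ℂ := by
          rw [← ContinuousLinearMap.adjoint_inner_left, (hherm s).adjoint_eq]
      _ = ⟪Q s y, x⟫_ℂ := by
          rw [← ContinuousLinearMap.comp_apply, hHR s]
      _ = ⟪y, Q s x⟫_ℂ := hQsa y x
  -- Step 3: Q φ' = φ'
  have hQφ' : Q s (φ' s) = φ' s := by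
    rw [hQ s]
    have : ⟪φ s, φ' s⟫_ℂ = 0 := by
      rw [← inner_conj_symm, horth s, map_zero]
    simp [ContinuousLinearMap.sub_apply, ContinuousLinearMap.smulRight_apply, this]
  -- Step 4: φ' = - R (H' φ)
  have hφ'eq : φ' s = -(R s (H' s (φ s))) := by
    have h1 : H s (φ' s) = -(H' s (φ s)) := eq_neg_of_add_eq_zero_right hkey
    calc φ' s = Q s (φ' s) := hQφ'.symm
      _ = R s (H s (φ' s)) := (hRH _).symm
      _ = -(R s (H' s (φ s))) := by rw [h1, map_neg]
  have hlampos := hlam s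
  have hRn : ‖R s‖ ≤ 1 / lam s := hRnorm s
  have hRnn : (0:ℝ) ≤ ‖R s‖ := norm_nonneg _
  have hφ'norm : ‖φ' s‖ ≤ ‖H' s‖ / lam s := by
    rw [hφ'eq, norm_neg]
    calc ‖R s (H' s (φ s))‖ ≤ ‖R s‖ * ‖H' s (φ s)‖ := (R s).le_opNorm _
      _ ≤ ‖R s‖ * (‖H' s‖ * ‖φ s‖) := by
          exact mul_le_mul_of_nonneg_left ((H' s).le_opNorm _) hRnn
      _ = ‖R s‖ * ‖H' s‖ := by rw [hunit s, mul_one]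
      _ ≤ (1 / lam s) * ‖H' s‖ := mul_le_mul_of_nonneg_right hRn (norm_nonneg _)
      _ = ‖H' s‖ / lam s := by ring
  calc ‖R s (φ' s)‖ ≤ ‖R s‖ * ‖φ' s‖ := (R s).le_opNorm _
    _ ≤ (1 / lam s) * (‖H' s‖ / lam s) := by
        apply mul_le_mul hRn hφ'norm (norm_nonneg _)
        positivity
    _ = ‖H' s‖ / (lam s) ^ 2 := by
        rw [pow_two, one_div, div_eq_mul_inv, div_eq_mul_inv, mul_inv]
        ring
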